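/- Let T_i (i = 0,…,n) be the Noumi operators on ℂ[x_1^{±1},…,x_n^{±1}]: T_i = t_{a_i} s_i + ((t_{a_i} − t_{a_i}^{−1}) + (t_{a_i/2} − t_{a_i/2}^{−1}) x^{a_i/2})/(1 − x^{a_i}) · (id − s_i), where the s_i act by (s_0 f)(x) = f(q x_1^{−1}, x_2,…,x_n), s_i swaps x_i and x_{i+1} for 1 ≤ i ≤ n−1, and (s_n f)(x) = f(x_1,…,x_{n−1},x_n^{−1}). Then each T_i satisfies the quadratic relation (T_i − t_{a_i})(T_i + t_{a_i}^{−1}) = 0 as an operator on Laurent polynomials. -/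

import Mathlib

noncomputable section

open Fin.NatCast

/-- The action of the simple reflections s_0,…,s_n of type C̃_n on points
x ∈ (ℂ^×)^n (0-based coordinates): (s_0 f)(x) = f(q x_1^{-1}, x_2, …),
s_i swaps x_i, x_{i+1} (1 ≤ i ≤ n−1), (s_n f)(x) = f(…, x_n^{-1}). -/
def psub (n : ℕ) [NeZero n] (q : ℂ) (i : Fin (n + 1)) (x : Fin n → ℂ) : Fin n → ℂ :=
  fun j =>
    if (i : ℕ) = 0 then (if (j : ℕ) = 0 then q * (x j)⁻¹ else x j)
    else if (i : ℕ) = n then (if (j : ℕ) = n - 1 then (x j)⁻¹ else x j)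
    else if (j : ℕ) = (i : ℕ) - 1 then x (((i : ℕ) : Fin n))
    else if (j : ℕ) = (i : ℕ) then x ((((i : ℕ) - 1 : ℕ) : Fin n))
    else x j

/-- The value of x^{a_i} at x: x^{a_0} = q x_1^{-2}, x^{a_i} = x_i x_{i+1}^{-1},
x^{a_n} = x_n². -/
def xav (n : ℕ) [NeZero n] (q : ℂ) (i : Fin (n + 1)) (x : Fin n → ℂ) : ℂ :=
  if (i : ℕ) = 0 then q * ((x ((0 : ℕ) : Fin n))⁻¹) ^ 2
  else if (i : ℕ) = n then (x (((n - 1 : ℕ) : Fin n))) ^ 2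
  else x ((((i : ℕ) - 1 : ℕ) : Fin n)) * (x (((i : ℕ) : Fin n)))⁻¹

/-- Evaluation of a Laurent polynomial (an element of the group algebra ℂ[ℤ^n]) at a
point x ∈ (ℂ^×)^n. -/
def laurentEval {n : ℕ} (p : AddMonoidAlgebra ℂ (Fin n → ℤ)) (x : Fin n → ℂ) : ℂ :=
  p.coeff.sum fun μ c => c * ∏ i, (x i) ^ (μ i)

/-- The Noumi operator
T_i = t_{a_i} s_i + ((t_{a_i} − t_{a_i}^{−1}) + (t_{a_i/2} − t_{a_i/2}^{−1}) x^{a_i/2})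
      /(1 − x^{a_i}) · (id − s_i),
acting pointwise on functions; `sq i x` denotes the value of x^{a_i/2} at x. -/
def noumiT (n : ℕ) [NeZero n] (q : ℂ) (t u : Fin (n + 1) → ℂ)
    (sq : Fin (n + 1) → (Fin n → ℂ) → ℂ) (i : Fin (n + 1))
    (f : (Fin n → ℂ) → ℂ) : (Fin n → ℂ) → ℂ :=
  fun x => t i * f (psub n q i x) +
    (((t i - (t i)⁻¹) + (u i - (u i)⁻¹) * sq i x) / (1 - xav n q i x)) *
      (f x - f (psub n q i x))

lemma psub_invol (n : ℕ) [NeZero n] (q : ℂ) (hq : q ≠ 0) (i : Fin (n + 1))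
    (x : Fin n → ℂ) (hx : ∀ j, x j ≠ 0) : psub n q i (psub n q i x) = x := by
  funext j
  by_cases h0 : (i : ℕ) = 0
  · have hform : ∀ (y : Fin n → ℂ) (k : Fin n), psub n q i y k =
        if (k : ℕ) = 0 then q * (y k)⁻¹ else y k := by
      intro y k; unfold psub; rw [if_pos h0]
    simp only [hform]
    by_cases hj : (j : ℕ) = 0
    · rw [if_pos hj, if_pos hj]
      field_simp
    · rw [if_neg hj, if_neg hj]
  · by_cases hn : (i : ℕ) = n
    · have hform : ∀ (y : Fin n → ℂ) (k : Fin n), psub n q i y k =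
          if (k : ℕ) = n - 1 then (y k)⁻¹ else y k := by
        intro y k; unfold psub; rw [if_neg h0, if_pos hn]
      simp only [hform]
      by_cases hj : (j : ℕ) = n - 1
      · rw [if_pos hj, if_pos hj, inv_inv]
      · rw [if_neg hj, if_neg hj]
    · have hin : (i : ℕ) < n := lt_of_le_of_ne (Nat.lt_succ_iff.mp i.isLt) hn
      have hi0 : 0 < (i : ℕ) := Nat.pos_of_ne_zero h0
      have hci : ((((i : ℕ)) : Fin n) : ℕ) = (i : ℕ) := by
        simp [Fin.val_natCast, Nat.mod_eq_of_lt hin]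
      have hci1 : (((((i : ℕ) - 1 : ℕ)) : Fin n) : ℕ) = (i : ℕ) - 1 := by
        simp [Fin.val_natCast, Nat.mod_eq_of_lt (by omega : (i : ℕ) - 1 < n)]
      have hform : ∀ (y : Fin n → ℂ) (k : Fin n), psub n q i y k =
          if (k : ℕ) = (i : ℕ) - 1 then y (((i : ℕ)) : Fin n)
            else if (k : ℕ) = (i : ℕ) then y ((((i : ℕ) - 1 : ℕ)) : Fin n)
            else y k := by
        intro y k; unfold psub; rw [if_neg h0, if_neg hn]
      simp only [hform]
      by_cases hj1 : (j : ℕ) = (i : ℕ) - 1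
      · rw [if_pos hj1, if_neg (by omega : ¬ (((((i : ℕ)) : Fin n)) : ℕ) = (i : ℕ) - 1),
          if_pos hci]
        congr 1
        exact Fin.ext (by rw [hci1, hj1])
      · rw [if_neg hj1]
        by_cases hj2 : (j : ℕ) = (i : ℕ)
        · rw [if_pos hj2, if_pos hci1]
          congr 1
          exact Fin.ext (by rw [hci, hj2])
        · rw [if_neg hj2, if_neg hj1, if_neg hj2]

lemma xav_ne_zero (n : ℕ) [NeZero n] (q : ℂ) (hq : q ≠ 0) (i : Fin (n + 1))
    (x : Fin n → ℂ) (hx : ∀ j, x j ≠ 0) : xav n q i x ≠ 0 := by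
  unfold xav
  split_ifs
  · exact mul_ne_zero hq (pow_ne_zero _ (inv_ne_zero (hx _)))
  · exact pow_ne_zero _ (hx _)
  · exact mul_ne_zero (hx _) (inv_ne_zero (hx _))

lemma key_identity (t u s A B : ℂ) (ht : t ≠ 0) (hu : u ≠ 0) (hs : s ≠ 0)
    (h1 : 1 - s ^ 2 ≠ 0) (h2 : 1 - (s⁻¹) ^ 2 ≠ 0) :
    t * (t * A + (((t - t⁻¹) + (u - u⁻¹) * s⁻¹) / (1 - (s⁻¹) ^ 2)) * (B - A)) +
      (((t - t⁻¹) + (u - u⁻¹) * s) / (1 - s ^ 2)) *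
        ((t * B + (((t - t⁻¹) + (u - u⁻¹) * s) / (1 - s ^ 2)) * (A - B)) -
          (t * A + (((t - t⁻¹) + (u - u⁻¹) * s⁻¹) / (1 - (s⁻¹) ^ 2)) * (B - A))) =
    (t - t⁻¹) * (t * B + (((t - t⁻¹) + (u - u⁻¹) * s) / (1 - s ^ 2)) * (A - B)) + A := by
  have hti : t⁻¹ * t = 1 := inv_mul_cancel₀ ht
  have hc' : ((t - t⁻¹) + (u - u⁻¹) * s⁻¹) / (1 - (s⁻¹) ^ 2) =
      -(((t - t⁻¹) * s ^ 2 + (u - u⁻¹) * s) / (1 - s ^ 2)) := by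
    rw [div_eq_iff h2, neg_mul, div_mul_eq_mul_div, eq_comm, neg_eq_iff_eq_neg,
      div_eq_iff h1]
    field_simp
    ring
  have hR : (((t - t⁻¹) + (u - u⁻¹) * s) / (1 - s ^ 2)) +
      (((t - t⁻¹) + (u - u⁻¹) * s⁻¹) / (1 - (s⁻¹) ^ 2)) = t - t⁻¹ := by
    rw [hc', ← sub_eq_add_neg, div_sub_div_same, div_eq_iff h1]
    ring
  linear_combination (A - B) * ((((t - t⁻¹) + (u - u⁻¹) * s) / (1 - s ^ 2)) - t) * hR +
    A * hti

/-- each Noumi operator T_i satisfies the quadratic relation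
(T_i − t_{a_i})(T_i + t_{a_i}^{−1}) = 0, i.e. T_i² = (t_{a_i} − t_{a_i}^{−1})T_i + 1,
as an operator on Laurent polynomials (identity of rational functions, evaluated at
every point where the expressions are defined).  Here t i = t_{a_i}, u i = t_{a_i/2}
(so u i = 1 for 1 ≤ i ≤ n−1 since a_i/2 is not a root), and sq i x is the value of
x^{a_i/2}, satisfying sq² = x^{a_i} and s_i-equivariance. -/
theorem stmt14 (n : ℕ) (hn : 2 ≤ n) [NeZero n] (q : ℂ) (hq : q ≠ 0)
    (t u : Fin (n + 1) → ℂ) (ht : ∀ i, t i ≠ 0) (hu : ∀ i, u i ≠ 0)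
    (humid : ∀ i : Fin (n + 1), 0 < (i : ℕ) → (i : ℕ) < n → u i = 1)
    (sq : Fin (n + 1) → (Fin n → ℂ) → ℂ)
    (hsq2 : ∀ i x, (sq i x) ^ 2 = xav n q i x)
    (hsqs : ∀ i x, (∀ j, x j ≠ 0) → sq i (psub n q i x) = (sq i x)⁻¹)
    (i : Fin (n + 1)) (p : AddMonoidAlgebra ℂ (Fin n → ℤ))
    (x : Fin n → ℂ) (hx : ∀ j, x j ≠ 0)
    (hd1 : 1 - xav n q i x ≠ 0) (hd2 : 1 - xav n q i (psub n q i x) ≠ 0) :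
    noumiT n q t u sq i (noumiT n q t u sq i (laurentEval p)) x =
      (t i - (t i)⁻¹) * noumiT n q t u sq i (laurentEval p) x + laurentEval p x := by
  have hyx : psub n q i (psub n q i x) = x := psub_invol n q hq i x hx
  have hss : sq i (psub n q i x) = (sq i x)⁻¹ := hsqs i x hx
  have hax : xav n q i x = (sq i x) ^ 2 := (hsq2 i x).symm
  have hay : xav n q i (psub n q i x) = ((sq i x)⁻¹) ^ 2 := by
    rw [← hsq2 i (psub n q i x), hss]
  have hs0 : sq i x ≠ 0 := by
    intro h
    exact xav_ne_zero n q hq i x hx (by rw [← hsq2 i x, h]; ring)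
  have h1 : 1 - (sq i x) ^ 2 ≠ 0 := by rw [← hax]; exact hd1
  have h2 : 1 - ((sq i x)⁻¹) ^ 2 ≠ 0 := by rw [← hay]; exact hd2
  simp only [noumiT, hyx, hss, hax, hay]
  exact key_identity (t i) (u i) (sq i x) (laurentEval p x)
    (laurentEval p (psub n q i x)) (ht i) (hu i) hs0 h1 h2

end
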